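/- Let M be a smooth manifold, O_M its sheaf of smooth functions, and (E, Q) a sheaf of differential graded O_M-modules (a cochain complex of sheaves of O_M-modules with O_M-linear differential Q). Then the presheaf U ↦ H•(E(U), Q(U)) = ker Q(U)/im Q(U) is a sheaf of graded O_M-modules. -/

import Mathlib

open scoped Manifold
open TopologicalSpace Set

variable {EM : Type} [NormedAddCommGroup EM] [NormedSpace ℝ EM] [FiniteDimensional ℝ EM]
  {H : Type} [TopologicalSpace H] (I : ModelWithCorners ℝ EM H)
  (M : Type) [TopologicalSpace M] [ChartedSpace H M] [IsManifold I (⊤ : ℕ∞) M]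
  [T2Space M] [SigmaCompactSpace M]

/-- A sheaf of differential graded `O_M`-modules on a smooth manifold `M`:
a ℤ-indexed family of sheaves of abelian groups `sec k`, acted on by smooth
real-valued functions, with an `O_M`-linear square-zero degree `+1` differential `Q`. -/
structure DGSheafOfModules where
  /-- sections of degree `k` over an open set -/
  sec : ℤ → Opens M → AddCommGrpCat
  /-- restriction maps -/
  res : ∀ (k : ℤ) ⦃V U : Opens M⦄, V ≤ U → sec k U →+ sec k V
  res_self : ∀ (k : ℤ) (U : Opens M) (s : sec k U), res k (le_refl U) s = s
  res_res : ∀ (k : ℤ) ⦃W V U : Opens M⦄ (hWV : W ≤ V) (hVU : V ≤ U) (s : sec k U),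
    res k hWV (res k hVU s) = res k (le_trans hWV hVU) s
  /-- the action of (globally defined) smooth functions -/
  smul : ∀ (k : ℤ) (U : Opens M) (f : M → ℝ), ContMDiff I 𝓘(ℝ, ℝ) (⊤ : ℕ∞) f → sec k U → sec k U
  smul_add : ∀ k U f hf (s t : sec k U), smul k U f hf (s + t) = smul k U f hf s + smul k U f hf t
  add_smul : ∀ k U (f g : M → ℝ) hf hg hfg (s : sec k U),
    smul k U (f + g) hfg s = smul k U f hf s + smul k U g hg s
  one_smul : ∀ k U h1 (s : sec k U), smul k U 1 h1 s = s
  mul_smul : ∀ k U (f g : M → ℝ) hf hg hfg (s : sec k U),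
    smul k U (f * g) hfg s = smul k U f hf (smul k U g hg s)
  /-- the action only depends on the values of the function on the open set;
  this encodes that `sec k U` is a module over `O_M(U)`. -/
  smul_congr : ∀ k (U : Opens M) (f g : M → ℝ) hf hg (s : sec k U),
    (∀ x ∈ U, f x = g x) → smul k U f hf s = smul k U g hg s
  res_smul : ∀ k ⦃V U : Opens M⦄ (h : V ≤ U) f hf (s : sec k U),
    res k h (smul k U f hf s) = smul k V f hf (res k h s)
  /-- the differential -/
  Q : ∀ (k : ℤ) (U : Opens M), sec k U →+ sec (k + 1) U
  Q_Q : ∀ (k : ℤ) (U : Opens M) (s : sec k U), Q (k + 1) U (Q k U s) = 0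
  Q_res : ∀ (k : ℤ) ⦃V U : Opens M⦄ (h : V ≤ U) (s : sec k U),
    Q k V (res k h s) = res (k + 1) h (Q k U s)
  /-- `O_M`-linearity of the differential -/
  Q_smul : ∀ (k : ℤ) (U : Opens M) f hf (s : sec k U),
    Q k U (smul k U f hf s) = smul (k + 1) U f hf (Q k U s)
  /-- each `sec k` is a sheaf: locality -/
  locality : ∀ (k : ℤ) (U : Opens M) {ι : Type} (V : ι → Opens M) (hVU : ∀ i, V i ≤ U),
    (∀ x ∈ U, ∃ i, x ∈ V i) → ∀ s t : sec k U,
    (∀ i, res k (hVU i) s = res k (hVU i) t) → s = t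
  /-- each `sec k` is a sheaf: gluing -/
  glue : ∀ (k : ℤ) (U : Opens M) {ι : Type} (V : ι → Opens M) (hVU : ∀ i, V i ≤ U),
    (∀ x ∈ U, ∃ i, x ∈ V i) → ∀ s : ∀ i, sec k (V i),
    (∀ i j, res k (inf_le_left : V i ⊓ V j ≤ V i) (s i) =
      res k (inf_le_right : V i ⊓ V j ≤ V j) (s j)) →
    ∃ t : sec k U, ∀ i, res k (hVU i) t = s i

set_option linter.unusedSectionVars false

namespace DGSheafOfModules

variable {I} {M} (E : DGSheafOfModules I M)

lemma smul_zero_sec (k : ℤ) (U : Opens M) (f : M → ℝ) (hf : ContMDiff I 𝓘(ℝ, ℝ) (⊤ : ℕ∞) f) :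
    E.smul k U f hf (0 : E.sec k U) = 0 := by
  have h := E.smul_add k U f hf 0 0
  rw [add_zero] at h
  exact add_left_cancel (h.symm.trans (add_zero _).symm)

lemma zerofun_smul (k : ℤ) (U : Opens M) (h0 : ContMDiff I 𝓘(ℝ, ℝ) (⊤ : ℕ∞) (0 : M → ℝ))
    (s : E.sec k U) : E.smul k U 0 h0 s = 0 := by
  have h := E.add_smul k U 0 0 h0 h0 (by simpa using h0) s
  have h2 : E.smul k U (0 + 0) (by simpa using h0) s = E.smul k U 0 h0 s :=
    E.smul_congr k U _ _ _ _ s (fun x _ => by simp)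
  rw [h2] at h
  exact add_left_cancel (h.symm.trans (add_zero _).symm)

lemma smul_vanish (k : ℤ) (U : Opens M) (f : M → ℝ) (hf : ContMDiff I 𝓘(ℝ, ℝ) (⊤ : ℕ∞) f)
    (s : E.sec k U) (h : ∀ x ∈ U, f x = 0) : E.smul k U f hf s = 0 := by
  rw [E.smul_congr k U f 0 hf contMDiff_const s h]
  exact E.zerofun_smul k U _ s

lemma smul_sub (k : ℤ) (U : Opens M) (f : M → ℝ) (hf : ContMDiff I 𝓘(ℝ, ℝ) (⊤ : ℕ∞) f)
    (s t : E.sec k U) :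
    E.smul k U f hf (s - t) = E.smul k U f hf s - E.smul k U f hf t := by
  have h := E.smul_add k U f hf (s - t) t
  rw [sub_add_cancel] at h
  rw [eq_sub_iff_add_eq, ← h]

lemma smul_sum (k : ℤ) (U : Opens M) {α : Type} (F : Finset α) (f : α → M → ℝ)
    (hf : ∀ a, ContMDiff I 𝓘(ℝ, ℝ) (⊤ : ℕ∞) (f a))
    (hF : ContMDiff I 𝓘(ℝ, ℝ) (⊤ : ℕ∞) (∑ a ∈ F, f a)) (s : E.sec k U) :
    E.smul k U (∑ a ∈ F, f a) hF s = ∑ a ∈ F, E.smul k U (f a) (hf a) s := by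
  classical
  induction F using Finset.induction with
  | empty =>
      have h2 : E.smul k U (∑ a ∈ (∅ : Finset α), f a) hF s
          = E.smul k U 0 contMDiff_const s :=
        E.smul_congr k U _ _ _ _ s (fun x _ => by simp)
      rw [h2, E.zerofun_smul, Finset.sum_empty]
  | insert a F hnot ih =>
      have hsum : ContMDiff I 𝓘(ℝ, ℝ) (⊤ : ℕ∞) (∑ b ∈ F, f b) := by
        exact contMDiff_finset_sum' (fun b _ => hf b)
      have hadd : ContMDiff I 𝓘(ℝ, ℝ) (⊤ : ℕ∞) (f a + ∑ b ∈ F, f b) := (hf a).add hsum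
      have h2 : E.smul k U (∑ b ∈ insert a F, f b) hF s
          = E.smul k U (f a + ∑ b ∈ F, f b) hadd s :=
        E.smul_congr k U _ _ _ _ s (fun x _ => by rw [Finset.sum_insert hnot])
      rw [h2, E.add_smul k U (f a) (∑ b ∈ F, f b) (hf a) hsum hadd s, ih hsum,
        Finset.sum_insert hnot]

end DGSheafOfModules

namespace DGSheafOfModules
variable {I} {M} (E : DGSheafOfModules I M)

/-- Restriction along a composite, with an arbitrary proof of the composite inequality. -/
lemma res_res' (k : ℤ) {X Y W : Opens M} (h1 : X ≤ Y) (h2 : Y ≤ W) (h3 : X ≤ W)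
    (e : E.sec k W) : E.res k h1 (E.res k h2 e) = E.res k h3 e :=
  E.res_res k h1 h2 e

/-- Extension of a section multiplied by a function vanishing on `B`, from `A` to `W = A ∪ B`. -/
lemma extend_section (k : ℤ) (W A B : Opens M) (hA : A ≤ W) (hB : B ≤ W)
    (hcov : ∀ x ∈ W, x ∈ A ∨ x ∈ B)
    (f : M → ℝ) (hf : ContMDiff I 𝓘(ℝ, ℝ) (⊤ : ℕ∞) f) (hfB : ∀ x ∈ B, f x = 0)
    (ξ : E.sec k A) :
    ∃ e : E.sec k W, E.res k hA e = E.smul k A f hf ξ ∧ E.res k hB e = 0 := by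
  classical
  have hVb : ∀ b : Bool, (bif b then A else B) ≤ W := by rintro (_ | _); exacts [hB, hA]
  have hcov' : ∀ x ∈ W, ∃ b : Bool, x ∈ (bif b then A else B) := by
    intro x hx
    rcases hcov x hx with h | h
    · exact ⟨true, h⟩
    · exact ⟨false, h⟩
  set sb : ∀ b : Bool, E.sec k (bif b then A else B) :=
    fun b => Bool.rec (motive := fun b => E.sec k (bif b then A else B))
      (0 : E.sec k B) (E.smul k A f hf ξ) b with hsb
  have compat : ∀ b b', E.res k (inf_le_left) (sb b) = E.res k (inf_le_right) (sb b') := by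
    rintro (_ | _) (_ | _)
    · rfl
    · -- b = false (section 0 on B), b' = true (smul on A)
      show E.res k (inf_le_left : B ⊓ A ≤ B) (0 : E.sec k B)
          = E.res k (inf_le_right : B ⊓ A ≤ A) (E.smul k A f hf ξ)
      rw [map_zero, E.res_smul]
      exact (E.smul_vanish k (B ⊓ A) f hf _ (fun x hx => hfB x hx.1)).symm
    · show E.res k (inf_le_left : A ⊓ B ≤ A) (E.smul k A f hf ξ)
          = E.res k (inf_le_right : A ⊓ B ≤ B) (0 : E.sec k B)
      rw [map_zero, E.res_smul]
      exact E.smul_vanish k (A ⊓ B) f hf _ (fun x hx => hfB x hx.2)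
    · rfl
  obtain ⟨e, he⟩ := E.glue k W _ hVb hcov' sb compat
  exact ⟨e, he true, he false⟩

/-- A section that restricts to `f • ξ` on `A` and to `0` on `B` vanishes on any open
subset where `f` vanishes. -/
lemma extend_section_zero (k : ℤ) (W A B : Opens M) (hA : A ≤ W) (hB : B ≤ W)
    (hcov : ∀ x ∈ W, x ∈ A ∨ x ∈ B)
    (f : M → ℝ) (hf : ContMDiff I 𝓘(ℝ, ℝ) (⊤ : ℕ∞) f)
    (ξ : E.sec k A) (e : E.sec k W)
    (h1 : E.res k hA e = E.smul k A f hf ξ) (h2 : E.res k hB e = 0)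
    (N : Opens M) (hN : N ≤ W) (hfN : ∀ y ∈ N, f y = 0) :
    E.res k hN e = 0 := by
  have hVb : ∀ b : Bool, (bif b then N ⊓ A else N ⊓ B) ≤ N := by
    rintro (_ | _); exacts [inf_le_left, inf_le_left]
  have hcov' : ∀ x ∈ N, ∃ b : Bool, x ∈ (bif b then N ⊓ A else N ⊓ B) := by
    intro x hx
    rcases hcov x (hN hx) with h | h
    · exact ⟨true, ⟨hx, h⟩⟩
    · exact ⟨false, ⟨hx, h⟩⟩
  refine E.locality k N _ hVb hcov' _ 0 ?_
  rintro (_ | _)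
  · -- N ⊓ B
    show E.res k (inf_le_left : N ⊓ B ≤ N) (E.res k hN e)
        = E.res k (inf_le_left : N ⊓ B ≤ N) (0 : E.sec k N)
    rw [map_zero, E.res_res' k (inf_le_left : N ⊓ B ≤ N) hN (le_trans inf_le_right hB) e,
      ← E.res_res' k (inf_le_right : N ⊓ B ≤ B) hB (le_trans inf_le_right hB) e, h2, map_zero]
  · -- N ⊓ A
    show E.res k (inf_le_left : N ⊓ A ≤ N) (E.res k hN e)
        = E.res k (inf_le_left : N ⊓ A ≤ N) (0 : E.sec k N)
    rw [map_zero, E.res_res' k (inf_le_left : N ⊓ A ≤ N) hN (le_trans inf_le_right hA) e,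
      ← E.res_res' k (inf_le_right : N ⊓ A ≤ A) hA (le_trans inf_le_right hA) e, h1, E.res_smul]
    exact E.smul_vanish k (N ⊓ A) f hf _ (fun x hx => hfN x hx.1)

/-- Locally finite sums of extended sections. -/
lemma sum_exists (k : ℤ) (W : Opens M) {κ : Type} (A B : κ → Opens M)
    (hA : ∀ a, A a ≤ W) (hB : ∀ a, B a ≤ W)
    (hAB : ∀ a, ∀ x ∈ W, x ∈ A a ∨ x ∈ B a)
    (f : κ → M → ℝ) (hf : ∀ a, ContMDiff I 𝓘(ℝ, ℝ) (⊤ : ℕ∞) (f a))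
    (hfB : ∀ a, ∀ x ∈ B a, f a x = 0)
    (ξ : ∀ a, E.sec k (A a))
    (locfin : ∀ x ∈ W, ∃ N : Opens M, x ∈ N ∧ N ≤ W ∧ ∃ F : Finset κ,
      ∀ a ∉ F, ∀ y ∈ N, f a y = 0) :
    ∃ (σ : E.sec k W) (e : ∀ a, E.sec k W),
      (∀ a, E.res k (hA a) (e a) = E.smul k (A a) (f a) (hf a) (ξ a)) ∧
      (∀ a, E.res k (hB a) (e a) = 0) ∧
      (∀ (N : Opens M) (hN : N ≤ W) (F : Finset κ),
        (∀ a ∉ F, ∀ y ∈ N, f a y = 0) →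
        E.res k hN σ = ∑ a ∈ F, E.res k hN (e a)) := by
  classical
  choose e he1 he2 using fun a =>
    E.extend_section k W (A a) (B a) (hA a) (hB a) (hAB a) (f a) (hf a) (hfB a) (ξ a)
  have hzero : ∀ a (N : Opens M) (hN : N ≤ W), (∀ y ∈ N, f a y = 0) →
      E.res k hN (e a) = 0 := fun a N hN h =>
    E.extend_section_zero k W (A a) (B a) (hA a) (hB a) (hAB a) (f a) (hf a) (ξ a)
      (e a) (he1 a) (he2 a) N hN h
  let P := {q : Opens M × Finset κ // q.1 ≤ W ∧ ∀ a ∉ q.2, ∀ y ∈ q.1, f a y = 0}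
  have cover : ∀ x ∈ W, ∃ p : P, x ∈ p.1.1 := by
    intro x hx
    obtain ⟨N, hxN, hNW, F, hF⟩ := locfin x hx
    exact ⟨⟨(N, F), hNW, hF⟩, hxN⟩
  set sp : ∀ p : P, E.sec k p.1.1 := fun p => ∑ a ∈ p.1.2, E.res k p.2.1 (e a) with hsp
  have key : ∀ (p p' : P) (pp : P) (hle : p.1.1 ⊓ p'.1.1 ≤ pp.1.1)
      (hsub : pp.1.2 ⊆ p.1.2 ∪ p'.1.2),
      E.res k hle (sp pp) = ∑ a ∈ p.1.2 ∪ p'.1.2,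
        E.res k (le_trans inf_le_left p.2.1) (e a) := by
    intro p p' pp hle hsub
    have hP : p.1.1 ⊓ p'.1.1 ≤ W := le_trans inf_le_left p.2.1
    rw [hsp, map_sum]
    rw [Finset.sum_congr rfl (fun a _ => E.res_res' k hle pp.2.1 hP (e a))]
    refine Finset.sum_subset hsub (fun a _ ha => ?_)
    exact hzero a _ hP (fun y hy => pp.2.2 a ha y (hle hy))
  have compat : ∀ p p' : P, E.res k (inf_le_left) (sp p) = E.res k (inf_le_right) (sp p') := by
    intro p p'
    rw [key p p' p inf_le_left Finset.subset_union_left,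
      key p p' p' inf_le_right Finset.subset_union_right]
  obtain ⟨σ, hσ⟩ := E.glue k W (fun p : P => p.1.1) (fun p => p.2.1) cover sp compat
  refine ⟨σ, e, he1, he2, ?_⟩
  intro N hN F hF
  exact hσ ⟨(N, F), hN, hF⟩
end DGSheafOfModules

/-- Existence of a smooth partition of unity on an open set `U ⊆ M`, subordinate (after
refinement) to a given open cover of `U`, consisting of globally smooth functions on `M`. -/
lemma exists_partition_data (U : Opens M) {ι : Type} (V : ι → Opens M)
    (hcov : ∀ x ∈ U, ∃ i, x ∈ V i) :
    ∃ (κ : Type) (j : κ → ι) (A B : κ → Opens M)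
      (f : κ → M → ℝ) (_ : ∀ a, ContMDiff I 𝓘(ℝ, ℝ) (⊤ : ℕ∞) (f a)),
      (∀ a, A a ≤ V (j a)) ∧ (∀ a, A a ≤ U) ∧
      (∀ a, ∀ x : M, x ∈ A a ∨ x ∈ B a) ∧
      (∀ a, ∀ x ∈ B a, f a x = 0) ∧
      (∀ x ∈ U, ∃ N : Opens M, x ∈ N ∧ N ≤ U ∧ ∃ F : Finset κ,
        (∀ a ∉ F, ∀ y ∈ N, f a y = 0) ∧ (∀ y ∈ N, ∑ a ∈ F, f a y = 1)) := by
  classical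
  haveI : LocallyCompactSpace H := I.locallyCompactSpace
  haveI : LocallyCompactSpace M := ChartedSpace.locallyCompactSpace H M
  haveI : SecondCountableTopology H := I.secondCountableTopology
  haveI : SecondCountableTopology M := ChartedSpace.secondCountable_of_sigmaCompact H M
  haveI : LocallyCompactSpace ↥U := U.isOpen.locallyCompactSpace
  haveI : SigmaCompactSpace ↥U := inferInstance
  -- choose compact neighborhoods inside the cover
  have hmem : ∀ u : ↥U, ∃ i, (u : M) ∈ (V i ⊓ U : Opens M) := by
    intro u
    obtain ⟨i, hi⟩ := hcov (u : M) u.2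
    exact ⟨i, hi, u.2⟩
  choose j hj using hmem
  have hKex : ∀ u : ↥U, ∃ K : Set M, IsCompact K ∧ (u : M) ∈ interior K ∧
      K ⊆ (V (j u) ⊓ U : Opens M) := fun u =>
    exists_compact_subset (V (j u) ⊓ U).isOpen (hj u)
  choose K hKc hKx hKV using hKex
  -- smooth partition of unity on the manifold ↥U
  obtain ⟨ρ, hρ⟩ := SmoothPartitionOfUnity.exists_isSubordinate (M := ↥U) I isClosed_univ
    (fun u => (Subtype.val ⁻¹' interior (K u)))
    (fun u => isOpen_interior.preimage continuous_subtype_val)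
    (fun z _ => Set.mem_iUnion.2 ⟨z, hKx z⟩)
  -- compact supports
  have hcpt : ∀ u : ↥U, HasCompactSupport (ρ u) := by
    intro u
    have hKpre : IsCompact (Subtype.val ⁻¹' K u : Set ↥U) := by
      rw [Subtype.isCompact_iff, Set.image_preimage_eq_inter_range, Subtype.range_coe,
        Set.inter_eq_left.mpr (fun x hx => (hKV u hx).2)]
      exact hKc u
    exact IsCompact.of_isClosed_subset hKpre (isClosed_tsupport _)
      ((hρ u).trans (Set.preimage_mono interior_subset))
  -- the globally defined functions
  set f : ↥U → M → ℝ := fun a => Function.extend Subtype.val ⇑(ρ a) 0 with hfdef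
  have hval : ∀ (a : ↥U) (z : ↥U), f a (z : M) = ρ a z := fun a z =>
    Subtype.val_injective.extend_apply _ _ z
  have hval' : ∀ (a : ↥U) (x : M), x ∉ (U : Set M) → f a x = 0 := by
    intro a x hx
    have : ¬∃ z : ↥U, (z : M) = x := by
      rintro ⟨z, rfl⟩; exact hx z.2
    simp [hfdef, Function.extend_apply' _ _ _ this]
  have hf : ∀ a : ↥U, ContMDiff I 𝓘(ℝ, ℝ) (⊤ : ℕ∞) (f a) := fun a =>
    ContMDiff.extend_zero (hcpt a) (ρ a).contMDiff
  -- supports in M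
  set D : ↥U → Set M := fun a => Subtype.val '' tsupport (ρ a) with hDdef
  have hDc : ∀ a, IsClosed (D a) := fun a =>
    ((hcpt a).image continuous_subtype_val).isClosed
  set A : ↥U → Opens M := fun a => ⟨interior (K a), isOpen_interior⟩ with hAdef
  set B : ↥U → Opens M := fun a => ⟨(D a)ᶜ, (hDc a).isOpen_compl⟩ with hBdef
  refine ⟨↥U, j, A, B, f, hf, ?_, ?_, ?_, ?_, ?_⟩
  · exact fun a x hx => (hKV a (interior_subset hx)).1
  · exact fun a x hx => (hKV a (interior_subset hx)).2
  · -- covering by A and B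
    intro a x
    by_cases hx : x ∈ D a
    · left
      obtain ⟨z, hz, rfl⟩ := hx
      exact hρ a hz
    · exact Or.inr hx
  · -- f vanishes on B
    intro a x hx
    by_cases hxU : x ∈ (U : Set M)
    · have hz : (⟨x, hxU⟩ : ↥U) ∉ tsupport (ρ a) := fun h => hx ⟨⟨x, hxU⟩, h, rfl⟩
      rw [show x = ((⟨x, hxU⟩ : ↥U) : M) from rfl, hval]
      exact image_eq_zero_of_notMem_tsupport hz
    · exact hval' a x hxU
  · -- local finiteness and sum 1
    intro x hx
    obtain ⟨t, ht, hfin⟩ := ρ.locallyFinite ⟨x, hx⟩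
    obtain ⟨t', htsub, ht'o, hxt'⟩ := mem_nhds_iff.mp ht
    refine ⟨⟨Subtype.val '' t', U.isOpen.isOpenMap_subtype_val t' ht'o⟩,
      ⟨⟨x, hx⟩, hxt', rfl⟩, ?_, hfin.toFinset, ?_, ?_⟩
    · rintro y ⟨z, _, rfl⟩; exact z.2
    · rintro a ha y ⟨z, hz, rfl⟩
      rw [hval]
      by_contra h0
      exact ha (hfin.mem_toFinset.2 ⟨z, h0, htsub hz⟩)
    · rintro y ⟨z, hz, rfl⟩
      have hsupp : Function.support (fun a => ρ a z) ⊆ ↑hfin.toFinset := by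
        intro a ha
        exact hfin.mem_toFinset.2 ⟨z, ha, htsub hz⟩
      calc ∑ a ∈ hfin.toFinset, f a ↑z = ∑ a ∈ hfin.toFinset, ρ a z :=
            Finset.sum_congr rfl (fun a _ => hval a z)
        _ = ∑ᶠ a, ρ a z := (finsum_eq_sum_of_support_subset _ hsupp).symm
        _ = 1 := ρ.sum_eq_one (Set.mem_univ z)

namespace DGSheafOfModules
variable {I} {M} (E : DGSheafOfModules I M)

lemma res_Q_eq (k : ℤ) {W A T' : Opens M} (hA : A ≤ W) (hT'A : T' ≤ A) (hT'W : T' ≤ W)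
    (f : M → ℝ) (hf : ContMDiff I 𝓘(ℝ, ℝ) (⊤ : ℕ∞) f) (ξ : E.sec k A) (e : E.sec k W)
    (h1 : E.res k hA e = E.smul k A f hf ξ) :
    E.res (k + 1) hT'W (E.Q k W e)
      = E.smul (k + 1) T' f hf (E.res (k + 1) hT'A (E.Q k A ξ)) := by
  rw [← E.Q_res k hT'W e, ← E.res_res' k hT'A hA hT'W e, h1, E.res_smul, E.Q_smul,
    E.Q_res k hT'A ξ]

lemma res_Q_zero (k : ℤ) {W B T' : Opens M} (hB : B ≤ W) (hT'B : T' ≤ B) (hT'W : T' ≤ W)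
    (e : E.sec k W) (h2 : E.res k hB e = 0) :
    E.res (k + 1) hT'W (E.Q k W e) = 0 := by
  rw [← E.Q_res k hT'W e, ← E.res_res' k hT'B hB hT'W e, h2, map_zero, map_zero]

end DGSheafOfModules

/-- For a sheaf `(E, Q)` of differential graded `O_M`-modules on a
smooth manifold `M`, the cohomology presheaf `U ↦ ker Q(U) / im Q(U)` is a sheaf:
it satisfies both the locality axiom and the gluing axiom (stated here at the level
of cocycles, for every open set and every open cover). -/
theorem cohomology_presheaf_is_sheaf (E : DGSheafOfModules I M)
    (k : ℤ) (U : Opens M) {ι : Type} (V : ι → Opens M) (hVU : ∀ i, V i ≤ U)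
    (hcov : ∀ x ∈ U, ∃ i, x ∈ V i) :
    -- locality for cohomology classes
    (∀ s : E.sec (k + 1) U, E.Q (k + 1) U s = 0 →
      (∀ i, ∃ η : E.sec k (V i), E.Q k (V i) η = E.res (k + 1) (hVU i) s) →
      ∃ η : E.sec k U, E.Q k U η = s) ∧
    -- gluing for cohomology classes
    (∀ s : ∀ i, E.sec (k + 1) (V i), (∀ i, E.Q (k + 1) (V i) (s i) = 0) →
      (∀ i j, ∃ η : E.sec k (V i ⊓ V j),
        E.Q k (V i ⊓ V j) η =
          E.res (k + 1) (inf_le_left : V i ⊓ V j ≤ V i) (s i) -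
            E.res (k + 1) (inf_le_right : V i ⊓ V j ≤ V j) (s j)) →
      ∃ t : E.sec (k + 1) U, E.Q (k + 1) U t = 0 ∧
        ∀ i, ∃ η : E.sec k (V i),
          E.Q k (V i) η = E.res (k + 1) (hVU i) t - s i) := by
  classical
  obtain ⟨κ, j, A, B, f, hf, hAV, hAU, hABcov, hfB, hloc1⟩ :=
    exists_partition_data I M U V hcov
  constructor
  · -- locality for cohomology
    intro s hsQ hloc
    choose η hη using hloc
    obtain ⟨σ, e, he1, he2, he3⟩ := E.sum_exists k U A (fun a => B a ⊓ U) hAU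
      (fun a => inf_le_right)
      (fun a x hx => (hABcov a x).imp id (fun h => ⟨h, hx⟩))
      f hf (fun a x hx => hfB a x hx.1)
      (fun a => E.res k (hAV a) (η (j a)))
      (fun x hx => by
        obtain ⟨N, hxN, hNU, F, hF⟩ := hloc1 x hx
        exact ⟨N, hxN, hNU, F, hF.1⟩)
    -- each Q (e a) is f a • s
    have hQe : ∀ a, E.Q k U (e a) = E.smul (k + 1) U (f a) (hf a) s := by
      intro a
      have hVb : ∀ b : Bool, (bif b then A a else B a ⊓ U) ≤ U := by
        rintro (_ | _); exacts [inf_le_right, hAU a]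
      refine E.locality (k + 1) U _ hVb
        (fun x hx => by
          rcases hABcov a x with h | h
          · exact ⟨true, h⟩
          · exact ⟨false, h, hx⟩) _ _ ?_
      rintro (_ | _)
      · -- B a ⊓ U
        show E.res (k + 1) (inf_le_right : B a ⊓ U ≤ U) (E.Q k U (e a))
            = E.res (k + 1) (inf_le_right : B a ⊓ U ≤ U) (E.smul (k + 1) U (f a) (hf a) s)
        rw [E.res_Q_zero k (inf_le_right : B a ⊓ U ≤ U) (le_refl _) (inf_le_right) (e a)
          (he2 a), E.res_smul]
        exact (E.smul_vanish (k + 1) (B a ⊓ U) (f a) (hf a) _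
          (fun x hx => hfB a x hx.1)).symm
      · -- A a
        show E.res (k + 1) (hAU a) (E.Q k U (e a))
            = E.res (k + 1) (hAU a) (E.smul (k + 1) U (f a) (hf a) s)
        rw [E.res_Q_eq k (hAU a) (le_refl (A a)) (hAU a) (f a) (hf a) _ (e a) (he1 a),
          E.res_smul]
        congr 1
        rw [E.res_self, E.Q_res k (hAV a) (η (j a)), hη (j a),
          E.res_res' (k + 1) (hAV a) (hVU (j a)) (hAU a) s]
    -- conclude Q σ = s by locality
    refine ⟨σ, ?_⟩
    set P := {q : Opens M × Finset κ // q.1 ≤ U ∧ (∀ a ∉ q.2, ∀ y ∈ q.1, f a y = 0) ∧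
      (∀ y ∈ q.1, ∑ a ∈ q.2, f a y = 1)} with hP
    refine E.locality (k + 1) U (fun p : P => p.1.1) (fun p => p.2.1)
      (fun x hx => by
        obtain ⟨N, hxN, hNU, F, hF1, hF2⟩ := hloc1 x hx
        exact ⟨⟨(N, F), hNU, hF1, hF2⟩, hxN⟩) _ _ ?_
    rintro ⟨⟨N, F⟩, hNU, hF1, hF2⟩
    show E.res (k + 1) hNU (E.Q k U σ) = E.res (k + 1) hNU s
    have hsum : ContMDiff I 𝓘(ℝ, ℝ) (⊤ : ℕ∞) (∑ a ∈ F, f a) := contMDiff_finset_sum' (fun a _ => hf a)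
    rw [← E.Q_res k hNU σ, he3 N hNU F hF1, map_sum]
    calc ∑ a ∈ F, E.Q k N (E.res k hNU (e a))
        = ∑ a ∈ F, E.smul (k + 1) N (f a) (hf a) (E.res (k + 1) hNU s) := by
          refine Finset.sum_congr rfl (fun a _ => ?_)
          rw [E.Q_res k hNU (e a), hQe a, E.res_smul]
      _ = E.smul (k + 1) N (∑ a ∈ F, f a) hsum (E.res (k + 1) hNU s) :=
          (E.smul_sum (k + 1) N F f hf hsum _).symm
      _ = E.smul (k + 1) N (1 : M → ℝ) contMDiff_const (E.res (k + 1) hNU s) :=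
          E.smul_congr _ _ _ _ _ _ _ (fun y hy => by
            rw [Finset.sum_apply]; exact hF2 y hy)
      _ = E.res (k + 1) hNU s := E.one_smul _ _ _ _
  · -- gluing for cohomology
    intro s hQs hglue
    choose η hη using hglue
    have hle : ∀ (i : ι) (a : κ), A a ⊓ V i ≤ V i ⊓ V (j a) := fun i a =>
      le_inf inf_le_right (le_trans inf_le_left (hAV a))
    choose σ e he1 he2 he3 using fun i =>
      E.sum_exists k (V i) (fun a => A a ⊓ V i) (fun a => B a ⊓ V i)
        (fun a => inf_le_right) (fun a => inf_le_right)
        (fun a x hx => (hABcov a x).imp (fun h => ⟨h, hx⟩) (fun h => ⟨h, hx⟩))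
        f hf (fun a x hx => hfB a x hx.1)
        (fun a => E.res k (hle i a) (η i (j a)))
        (fun x hx => by
          obtain ⟨N, hxN, hNU, F, hF⟩ := hloc1 x (hVU i hx)
          exact ⟨N ⊓ V i, ⟨hxN, hx⟩, inf_le_right, F,
            fun a ha y hy => hF.1 a ha y hy.1⟩)
    -- the key pointwise identity on double intersections
    have key : ∀ (i i' : ι) (a : κ),
        E.res (k + 1) (inf_le_left : V i ⊓ V i' ≤ V i) (E.Q k (V i) (e i a))
          - E.res (k + 1) (inf_le_right : V i ⊓ V i' ≤ V i') (E.Q k (V i') (e i' a))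
        = E.smul (k + 1) (V i ⊓ V i') (f a) (hf a)
            (E.res (k + 1) (inf_le_left : V i ⊓ V i' ≤ V i) (s i)
              - E.res (k + 1) (inf_le_right : V i ⊓ V i' ≤ V i') (s i')) := by
      intro i i' a
      have hVb : ∀ b : Bool,
          (bif b then A a ⊓ (V i ⊓ V i') else B a ⊓ (V i ⊓ V i')) ≤ V i ⊓ V i' := by
        rintro (_ | _); exacts [inf_le_right, inf_le_right]
      refine E.locality (k + 1) (V i ⊓ V i') _ hVb
        (fun x hx => by
          rcases hABcov a x with h | h
          · exact ⟨true, h, hx⟩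
          · exact ⟨false, h, hx⟩) _ _ ?_
      rintro (_ | _)
      · -- piece B a ⊓ (V i ⊓ V i')
        show E.res (k + 1) (inf_le_right : B a ⊓ (V i ⊓ V i') ≤ V i ⊓ V i') _
            = E.res (k + 1) (inf_le_right : B a ⊓ (V i ⊓ V i') ≤ V i ⊓ V i') _
        have pBi : B a ⊓ (V i ⊓ V i') ≤ V i :=
          le_trans inf_le_right inf_le_left
        have pBi' : B a ⊓ (V i ⊓ V i') ≤ V i' :=
          le_trans inf_le_right inf_le_right
        rw [map_sub,
          E.res_res' (k + 1) (inf_le_right : B a ⊓ (V i ⊓ V i') ≤ V i ⊓ V i')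
            (inf_le_left : V i ⊓ V i' ≤ V i) pBi (E.Q k (V i) (e i a)),
          E.res_res' (k + 1) (inf_le_right : B a ⊓ (V i ⊓ V i') ≤ V i ⊓ V i')
            (inf_le_right : V i ⊓ V i' ≤ V i') pBi' (E.Q k (V i') (e i' a)),
          E.res_Q_zero k (inf_le_right : B a ⊓ V i ≤ V i)
            (le_inf inf_le_left pBi) pBi (e i a) (he2 i a),
          E.res_Q_zero k (inf_le_right : B a ⊓ V i' ≤ V i')
            (le_inf inf_le_left pBi') pBi' (e i' a) (he2 i' a),
          E.res_smul,
          E.smul_vanish (k + 1) (B a ⊓ (V i ⊓ V i')) (f a) (hf a) _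
            (fun x hx => hfB a x hx.1), sub_zero]
      · -- piece A a ⊓ (V i ⊓ V i')
        show E.res (k + 1) (inf_le_right : A a ⊓ (V i ⊓ V i') ≤ V i ⊓ V i') _
            = E.res (k + 1) (inf_le_right : A a ⊓ (V i ⊓ V i') ≤ V i ⊓ V i') _
        have pA : A a ⊓ (V i ⊓ V i') ≤ A a := inf_le_left
        have pVi : A a ⊓ (V i ⊓ V i') ≤ V i := le_trans inf_le_right inf_le_left
        have pVi' : A a ⊓ (V i ⊓ V i') ≤ V i' := le_trans inf_le_right inf_le_right
        have pVja : A a ⊓ (V i ⊓ V i') ≤ V (j a) := le_trans pA (hAV a)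
        have hQin : ∀ (i₀ : ι) (p : A a ⊓ (V i ⊓ V i') ≤ V i₀),
            E.res (k + 1) p (E.Q k (V i₀) (e i₀ a))
              = E.smul (k + 1) (A a ⊓ (V i ⊓ V i')) (f a) (hf a)
                (E.res (k + 1) p (s i₀) - E.res (k + 1) pVja (s (j a))) := by
          intro i₀ p
          rw [E.res_Q_eq k (inf_le_right : A a ⊓ V i₀ ≤ V i₀) (le_inf pA p) p (f a) (hf a)
            _ (e i₀ a) (he1 i₀ a)]
          congr 1
          rw [E.Q_res k (hle i₀ a) (η i₀ (j a)),
            E.res_res' (k + 1) (le_inf pA p) (hle i₀ a) (le_inf p pVja) (E.Q k _ (η i₀ (j a))),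
            hη i₀ (j a), map_sub,
            E.res_res' (k + 1) (le_inf p pVja) (inf_le_left : V i₀ ⊓ V (j a) ≤ V i₀) p (s i₀),
            E.res_res' (k + 1) (le_inf p pVja) (inf_le_right : V i₀ ⊓ V (j a) ≤ V (j a)) pVja
              (s (j a))]
        rw [map_sub,
          E.res_res' (k + 1) (inf_le_right : A a ⊓ (V i ⊓ V i') ≤ V i ⊓ V i')
            (inf_le_left : V i ⊓ V i' ≤ V i) pVi (E.Q k (V i) (e i a)),
          E.res_res' (k + 1) (inf_le_right : A a ⊓ (V i ⊓ V i') ≤ V i ⊓ V i')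
            (inf_le_right : V i ⊓ V i' ≤ V i') pVi' (E.Q k (V i') (e i' a)),
          hQin i pVi, hQin i' pVi',
          E.res_smul, map_sub,
          E.res_res' (k + 1) (inf_le_right : A a ⊓ (V i ⊓ V i') ≤ V i ⊓ V i')
            (inf_le_left : V i ⊓ V i' ≤ V i) pVi (s i),
          E.res_res' (k + 1) (inf_le_right : A a ⊓ (V i ⊓ V i') ≤ V i ⊓ V i')
            (inf_le_right : V i ⊓ V i' ≤ V i') pVi' (s i'),
          E.smul_sub, E.smul_sub, E.smul_sub]
        abel
    -- compatibility of the corrected sections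
    have hcomp : ∀ i i',
        E.res (k + 1) (inf_le_left : V i ⊓ V i' ≤ V i) (s i - E.Q k (V i) (σ i))
          = E.res (k + 1) (inf_le_right : V i ⊓ V i' ≤ V i') (s i' - E.Q k (V i') (σ i')) := by
      intro i i'
      set P2 := {q : Opens M × Finset κ // q.1 ≤ U ∧ (∀ a ∉ q.2, ∀ y ∈ q.1, f a y = 0) ∧
        (∀ y ∈ q.1, ∑ a ∈ q.2, f a y = 1)} with hP2
      refine E.locality (k + 1) (V i ⊓ V i') (fun p : P2 => p.1.1 ⊓ (V i ⊓ V i'))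
        (fun p => inf_le_right)
        (fun x hx => by
          obtain ⟨N, hxN, hNU, F, hF1, hF2⟩ := hloc1 x (hVU i hx.1)
          exact ⟨⟨(N, F), hNU, hF1, hF2⟩, hxN, hx⟩) _ _ ?_
      rintro ⟨⟨N, F⟩, hNU, hF1, hF2⟩
      show E.res (k + 1) (inf_le_right : N ⊓ (V i ⊓ V i') ≤ V i ⊓ V i')
          (E.res (k + 1) inf_le_left (s i - E.Q k (V i) (σ i)))
        = E.res (k + 1) (inf_le_right : N ⊓ (V i ⊓ V i') ≤ V i ⊓ V i')
          (E.res (k + 1) inf_le_right (s i' - E.Q k (V i') (σ i')))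
      have pT : N ⊓ (V i ⊓ V i') ≤ V i ⊓ V i' := inf_le_right
      have pNi : N ⊓ (V i ⊓ V i') ≤ V i := le_trans pT inf_le_left
      have pNi' : N ⊓ (V i ⊓ V i') ≤ V i' := le_trans pT inf_le_right
      have hres : ∀ (i₀ : ι) (p : N ⊓ (V i ⊓ V i') ≤ V i₀),
          E.res (k + 1) p (E.Q k (V i₀) (σ i₀))
            = ∑ a ∈ F, E.res (k + 1) p (E.Q k (V i₀) (e i₀ a)) := by
        intro i₀ p
        rw [← E.Q_res k p (σ i₀),
          he3 i₀ (N ⊓ (V i ⊓ V i')) p F (fun a ha y hy => hF1 a ha y hy.1), map_sum]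
        exact Finset.sum_congr rfl (fun a _ => E.Q_res k p (e i₀ a))
      have hsum : ContMDiff I 𝓘(ℝ, ℝ) (⊤ : ℕ∞) (∑ a ∈ F, f a) :=
        contMDiff_finset_sum' (fun a _ => hf a)
      have hKey : ∑ a ∈ F, E.res (k + 1) pNi (E.Q k (V i) (e i a))
            - ∑ a ∈ F, E.res (k + 1) pNi' (E.Q k (V i') (e i' a))
          = E.res (k + 1) pNi (s i) - E.res (k + 1) pNi' (s i') := by
        rw [← Finset.sum_sub_distrib]
        calc ∑ a ∈ F, (E.res (k + 1) pNi (E.Q k (V i) (e i a))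
              - E.res (k + 1) pNi' (E.Q k (V i') (e i' a)))
            = ∑ a ∈ F, E.smul (k + 1) (N ⊓ (V i ⊓ V i')) (f a) (hf a)
                (E.res (k + 1) pNi (s i) - E.res (k + 1) pNi' (s i')) := by
              refine Finset.sum_congr rfl (fun a _ => ?_)
              rw [← E.res_res' (k + 1) pT (inf_le_left : V i ⊓ V i' ≤ V i) pNi
                  (E.Q k (V i) (e i a)),
                ← E.res_res' (k + 1) pT (inf_le_right : V i ⊓ V i' ≤ V i') pNi'
                  (E.Q k (V i') (e i' a)),
                ← map_sub, key i i' a, E.res_smul, map_sub,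
                E.res_res' (k + 1) pT (inf_le_left : V i ⊓ V i' ≤ V i) pNi (s i),
                E.res_res' (k + 1) pT (inf_le_right : V i ⊓ V i' ≤ V i') pNi' (s i')]
          _ = E.smul (k + 1) (N ⊓ (V i ⊓ V i')) (∑ a ∈ F, f a) hsum
                (E.res (k + 1) pNi (s i) - E.res (k + 1) pNi' (s i')) :=
              (E.smul_sum (k + 1) _ F f hf hsum _).symm
          _ = E.smul (k + 1) (N ⊓ (V i ⊓ V i')) (1 : M → ℝ) contMDiff_const
                (E.res (k + 1) pNi (s i) - E.res (k + 1) pNi' (s i')) :=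
              E.smul_congr _ _ _ _ _ _ _ (fun y hy => by
                rw [Finset.sum_apply]; exact hF2 y hy.1)
          _ = _ := E.one_smul _ _ _ _
      rw [E.res_res' (k + 1) pT (inf_le_left : V i ⊓ V i' ≤ V i) pNi (s i - E.Q k (V i) (σ i)),
        E.res_res' (k + 1) pT (inf_le_right : V i ⊓ V i' ≤ V i') pNi'
          (s i' - E.Q k (V i') (σ i')), map_sub, map_sub, hres i pNi, hres i' pNi',
        sub_eq_sub_iff_sub_eq_sub]
      exact hKey.symm
    obtain ⟨t, ht⟩ := E.glue (k + 1) U V hVU hcov (fun i => s i - E.Q k (V i) (σ i)) hcomp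
    refine ⟨t, ?_, fun i => ⟨-σ i, ?_⟩⟩
    · refine E.locality (k + 1 + 1) U V hVU hcov _ 0 (fun i => ?_)
      rw [map_zero, ← E.Q_res (k + 1) (hVU i) t, ht i, map_sub, hQs i,
        E.Q_Q k (V i) (σ i), sub_zero]
    · rw [map_neg, ht i]
      abel
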